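/- A monomial ideal J in k[x₁,...,xₙ] is stable if and only if its star set F(J) = { τ ∉ N(J) : τ/min(τ) ∈ N(J) } equals its minimal monomial generating set G(J). -/
import Mathlib


def MonomialIdeal {n : ℕ} (I : Set (Fin n → ℕ)) : Prop :=
  ∀ τ ∈ I, ∀ σ : Fin n → ℕ, τ + σ ∈ I

def IsStable {n : ℕ} (I : Set (Fin n → ℕ)) : Prop :=
  ∀ τ ∈ I, ∀ m j : Fin n, τ m ≠ 0 → (∀ l, l < m → τ l = 0) → m < j →
    τ - Pi.single m 1 + Pi.single j 1 ∈ I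

def starSet {n : ℕ} (I : Set (Fin n → ℕ)) : Set (Fin n → ℕ) :=
  {τ | τ ∈ I ∧ ∃ m : Fin n, τ m ≠ 0 ∧ (∀ l, l < m → τ l = 0) ∧
    τ - Pi.single m 1 ∉ I}

def minGens {n : ℕ} (I : Set (Fin n → ℕ)) : Set (Fin n → ℕ) :=
  {τ | τ ∈ I ∧ ∀ j : Fin n, τ j ≠ 0 → τ - Pi.single j 1 ∉ I}

lemma minGens_subset_starSet {n : ℕ} (J : Set (Fin n → ℕ))
    (h0 : (0 : Fin n → ℕ) ∉ J) : minGens J ⊆ starSet J := by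
  rintro τ ⟨hτ, hmin⟩
  have hne : τ ≠ 0 := by rintro rfl; exact h0 hτ
  have hsupp : ∃ m : Fin n, τ m ≠ 0 := by
    by_contra h
    push_neg at h
    exact hne (funext fun i => h i)
  classical
  let s : Finset (Fin n) := Finset.univ.filter (fun i => τ i ≠ 0)
  have hs : s.Nonempty := by
    obtain ⟨m, hm⟩ := hsupp
    exact ⟨m, by simp [s, hm]⟩
  let m := s.min' hs
  have hm : τ m ≠ 0 := by
    have := s.min'_mem hs
    simpa [s] using this
  refine ⟨hτ, m, hm, ?_, hmin m hm⟩
  intro l hl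
  by_contra hne'
  have : m ≤ l := s.min'_le l (by simp [s, hne'])
  exact absurd hl (not_lt.mpr this)

theorem stable_iff_starSet_eq_minGens {n : ℕ}
    (J : Set (Fin n → ℕ)) (hJ : MonomialIdeal J)
    (h0 : (0 : Fin n → ℕ) ∉ J) :
    IsStable J ↔ starSet J = minGens J := by
  constructor
  · intro hst
    refine Set.Subset.antisymm ?_ (minGens_subset_starSet J h0)
    rintro τ ⟨hτ, m, hm, hlt, hnm⟩
    refine ⟨hτ, ?_⟩
    intro j hj hmem
    by_cases hjm : j = m
    · exact hnm (hjm ▸ hmem)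
    have hmj : m < j := by
      rcases lt_trichotomy m j with h | h | h
      · exact h
      · exact absurd h.symm hjm
      · exact absurd (hlt j h) hj
    have h1 : ((τ - Pi.single j 1 : Fin n → ℕ)) m ≠ 0 := by
      simp [Pi.single_apply, Ne.symm hjm]
      omega
    have h2 : ∀ l, l < m → ((τ - Pi.single j 1 : Fin n → ℕ)) l = 0 := by
      intro l hl
      have : l ≠ j := ne_of_lt (lt_trans hl hmj)
      simp [Pi.single_apply, this, hlt l hl]
    have := hst (τ - Pi.single j 1) hmem m j h1 h2 hmj
    have heq : τ - Pi.single j 1 - Pi.single m 1 + Pi.single j 1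
        = τ - Pi.single m 1 := by
      funext l
      simp only [Pi.add_apply, Pi.sub_apply, Pi.single_apply]
      have hτj : 1 ≤ τ j := Nat.one_le_iff_ne_zero.mpr hj
      by_cases hl1 : l = j
      · subst hl1; simp [hjm]; omega
      · by_cases hl2 : l = m
        · subst hl2; simp [hl1]
        · simp [hl1, hl2]
    rw [heq] at this
    exact hnm this
  · intro h τ hτ m j hm hlt hmj
    by_contra hρ
    have hτj : τ + Pi.single j 1 ∈ J := hJ τ hτ _
    have hjm : m ≠ j := ne_of_lt hmj
    have hstar : τ + Pi.single j 1 ∈ starSet J := by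
      refine ⟨hτj, m, ?_, ?_, ?_⟩
      · simp [Pi.single_apply, hjm]
        omega
      · intro l hl
        have hlj : l ≠ j := ne_of_lt (lt_trans hl hmj)
        simp [Pi.single_apply, hlj, hlt l hl]
      · have heq : τ + Pi.single j 1 - Pi.single m 1
            = τ - Pi.single m 1 + Pi.single j 1 := by
          funext l
          simp only [Pi.add_apply, Pi.sub_apply, Pi.single_apply]
          have hτm : 1 ≤ τ m := Nat.one_le_iff_ne_zero.mpr hm
          by_cases hl1 : l = m
          · subst hl1; simp [hjm]
          · by_cases hl2 : l = j
            · subst hl2; simp [Ne.symm hjm]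
            · simp [hl1, hl2]
        rw [heq]
        exact hρ
    rw [h] at hstar
    have := hstar.2 j (by simp [Pi.single_apply]) 
    have heq : τ + Pi.single j 1 - Pi.single j 1 = τ := by
      funext l
      simp only [Pi.add_apply, Pi.sub_apply, Pi.single_apply]
      by_cases hl : l = j <;> simp [hl]
    rw [heq] at this
    exact this hτ
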